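/- For a pure bipartite state, MID equals the entanglement entropy: Q(|ψ⟩⟨ψ|) = I(ρ) - I(Π(ρ)) = S(ρ_C), where Π is the dephasing in the Schmidt (eigen)bases of the reduced states. -/

import Mathlib

open Matrix Kronecker

/-- Partial trace over the first tensor factor (the `C` register). -/
noncomputable def ptrFst {a b : Type*} [Fintype a] (M : Matrix (a × b) (a × b) ℂ) :
    Matrix b b ℂ := fun i j => ∑ c, M (c, i) (c, j)

/-- Partial trace over the second tensor factor (the `P` register). -/
noncomputable def ptrSnd {a b : Type*} [Fintype b] (M : Matrix (a × b) (a × b) ℂ) :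
    Matrix a a ℂ := fun i j => ∑ p, M (i, p) (j, p)

/-- Von Neumann entropy of a (Hermitian) matrix, via its eigenvalues. -/
noncomputable def vnEntropy {n : Type*} [Fintype n] [DecidableEq n]
    (ρ : Matrix n n ℂ) : ℝ :=
  if h : ρ.IsHermitian then -∑ i, h.eigenvalues i * Real.log (h.eigenvalues i) else 0

/-- Quantum mutual information `I(σ) = S(σ_C) + S(σ_P) - S(σ)`. -/
noncomputable def mutualInfo {C P : Type*} [Fintype C] [Fintype P]
    [DecidableEq C] [DecidableEq P] (σ : Matrix (C × P) (C × P) ℂ) : ℝ :=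
  vnEntropy (ptrSnd σ) + vnEntropy (ptrFst σ) - vnEntropy σ

section SpectralAux

open Polynomial

variable {n : Type*} [Fintype n] [DecidableEq n]

lemma charpoly_unitary_conj_aux (U A : Matrix n n ℂ) (h1 : U * star U = 1) :
    (U * A * star U).charpoly = A.charpoly := by
  have key : charmatrix (U * A * star U) =
      (C : ℂ →+* ℂ[X]).mapMatrix U * charmatrix A * (C : ℂ →+* ℂ[X]).mapMatrix (star U) := by
    have hcomm : Commute (scalar n (X : ℂ[X])) ((C : ℂ →+* ℂ[X]).mapMatrix U) :=
      scalar_commute _ (fun r => Commute.all _ _) _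
    simp only [charmatrix, mul_sub, sub_mul]
    congr 1
    · rw [← hcomm.eq, mul_assoc, ← _root_.map_mul, h1, _root_.map_one, mul_one]
    · rw [← _root_.map_mul, ← _root_.map_mul]
  have hdet : ((C : ℂ →+* ℂ[X]).mapMatrix U).det * ((C : ℂ →+* ℂ[X]).mapMatrix (star U)).det = 1 := by
    rw [← det_mul, ← _root_.map_mul, h1, _root_.map_one, det_one]
  rw [Matrix.charpoly, key, det_mul, det_mul, mul_right_comm, hdet, one_mul, Matrix.charpoly]

lemma charpoly_diagonal_aux (d : n → ℂ) :
    (diagonal d).charpoly = ∏ i, (X - C (d i)) := by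
  have : charmatrix (diagonal d) = diagonal fun i => X - C (d i) := by
    ext i j
    by_cases h : i = j <;> simp [charmatrix_apply, diagonal, h]
  rw [Matrix.charpoly, this, det_diagonal]

lemma eig_multiset_aux {M : Matrix n n ℂ} (hM : M.IsHermitian) (U : Matrix n n ℂ)
    (h1 : U * star U = 1) (d : n → ℝ)
    (hMU : M = U * diagonal (fun i => (d i : ℂ)) * star U) (g : ℝ → ℝ) :
    ∑ i, g (hM.eigenvalues i) = ∑ i, g (d i) := by
  have hU2 : (hM.eigenvectorUnitary : Matrix n n ℂ) * star (hM.eigenvectorUnitary : Matrix n n ℂ) = 1 :=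
    Matrix.mem_unitaryGroup_iff.mp hM.eigenvectorUnitary.2
  have e1 : M.charpoly = ∏ i, (X - C ((d i : ℂ))) := by
    rw [hMU, charpoly_unitary_conj_aux U _ h1, charpoly_diagonal_aux]
  have e2 : M.charpoly = ∏ i, (X - C ((hM.eigenvalues i : ℂ))) := by
    conv_lhs => rw [hM.spectral_theorem, Unitary.conjStarAlgAut_apply]
    rw [charpoly_unitary_conj_aux _ _ hU2, charpoly_diagonal_aux]
    simp [Function.comp]
  have hcp : (∏ i, (X - C ((hM.eigenvalues i : ℂ)))) = ∏ i, (X - C ((d i : ℂ))) := by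
    rw [← e1, ← e2]
  have hroots : (Finset.univ.val.map fun i => ((hM.eigenvalues i : ℂ))) =
      (Finset.univ.val.map fun i => ((d i : ℂ))) := by
    have e1' := Polynomial.roots_multiset_prod_X_sub_C
      (Finset.univ.val.map fun i => ((hM.eigenvalues i : ℂ)))
    have e2' := Polynomial.roots_multiset_prod_X_sub_C
      (Finset.univ.val.map fun i => ((d i : ℂ)))
    rw [← e1', ← e2']
    congr 1
    rw [Multiset.map_map, Multiset.map_map]
    exact hcp
  have hre : (Finset.univ.val.map fun i => hM.eigenvalues i) =
      (Finset.univ.val.map fun i => d i) := by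
    apply Multiset.map_injective (f := (Complex.ofReal : ℝ → ℂ)) Complex.ofReal_injective
    rw [Multiset.map_map, Multiset.map_map]
    exact hroots
  calc ∑ i, g (hM.eigenvalues i)
      = ((Finset.univ.val.map fun i => hM.eigenvalues i).map g).sum := by
        rw [Multiset.map_map]; rfl
    _ = ((Finset.univ.val.map fun i => d i).map g).sum := by rw [hre]
    _ = ∑ i, g (d i) := by rw [Multiset.map_map]; rfl

lemma sum_range_emb_aux {ι : Type*} [Fintype ι] (e : ι ↪ n) {M : Type*} [AddCommMonoid M]
    (f : n → M) (hf : ∀ x, (¬ ∃ i, e i = x) → f x = 0) : ∑ x, f x = ∑ i, f (e i) := by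
  rw [← Finset.sum_map Finset.univ e f]
  symm
  apply Finset.sum_subset (Finset.subset_univ _)
  intro x _ hx
  exact hf x (by simpa using hx)

lemma keyEntropy_aux {ι : Type*} [Fintype ι] [DecidableEq ι]
    (lam : ι → ℝ) (w : ι → n → ℂ)
    (hw : ∀ i j, ∑ x, (starRingEnd ℂ) (w i x) * w j x = if i = j then 1 else 0)
    (M : Matrix n n ℂ)
    (hM : M = ∑ i, (lam i : ℂ) • vecMulVec (w i) (star (w i))) :
    vnEntropy M = -∑ i, lam i * Real.log (lam i) := by
  classical
  let W : ι → EuclideanSpace ℂ n := fun i => (WithLp.equiv 2 (n → ℂ)).symm (w i)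
  have hWo : Orthonormal ℂ W := by
    rw [orthonormal_iff_ite]
    intro i j
    simpa [W, PiLp.inner_apply, RCLike.inner_apply, mul_comm] using hw i j
  have hcard : Fintype.card ι ≤ Fintype.card n := by
    simpa [finrank_euclideanSpace] using
      LinearIndependent.fintype_card_le_finrank hWo.linearIndependent
  obtain ⟨e⟩ : Nonempty (ι ↪ n) := Function.Embedding.nonempty_of_card_le hcard
  let v : n → EuclideanSpace ℂ n := fun x => if h : ∃ i, e i = x then W h.choose else 0
  have hve : ∀ i, v (e i) = W i := by
    intro i
    have h : ∃ i', e i' = e i := ⟨i, rfl⟩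
    have : h.choose = i := e.injective h.choose_spec
    simp only [v, dif_pos h, this]
  have hvo : Orthonormal ℂ ((Set.range e).restrict v) := by
    rw [orthonormal_iff_ite]
    rintro ⟨x, i, rfl⟩ ⟨y, j, rfl⟩
    have h2 := orthonormal_iff_ite.mp hWo i j
    change inner ℂ (v (e i)) (v (e j)) = _
    rw [hve, hve]
    rw [h2]
    congr 1
    simp [Subtype.ext_iff, e.injective.eq_iff]
  obtain ⟨bb, hbb⟩ := hvo.exists_orthonormalBasis_extension_of_card_eq
    (by simp [finrank_euclideanSpace])
  have hbbe : ∀ i, bb (e i) = W i := fun i => (hbb _ ⟨i, rfl⟩).trans (hve i)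
  let U : Matrix n n ℂ := Matrix.of fun x j => bb j x
  have hU1 : star U * U = 1 := by
    ext j k
    have h2 := orthonormal_iff_ite.mp bb.orthonormal j k
    simp only [PiLp.inner_apply, RCLike.inner_apply] at h2
    simp only [Matrix.mul_apply, Matrix.star_eq_conjTranspose, conjTranspose_apply,
      Matrix.one_apply, U, of_apply, RCLike.star_def]
    rw [← h2]; exact Finset.sum_congr rfl fun _ _ => mul_comm _ _
  have hU : U * star U = 1 := mul_eq_one_comm.mp hU1
  let d : n → ℝ := fun x => if h : ∃ i, e i = x then lam h.choose else 0
  have hde : ∀ i, d (e i) = lam i := by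
    intro i
    have h : ∃ i', e i' = e i := ⟨i, rfl⟩
    have : h.choose = i := e.injective h.choose_spec
    simp only [d, dif_pos h, this]
  have hd0 : ∀ x, (¬ ∃ i, e i = x) → d x = 0 := fun x h => dif_neg h
  have hwW : ∀ i x, W i x = w i x := fun i x => rfl
  have hMU : M = U * diagonal (fun x => (d x : ℂ)) * star U := by
    rw [hM]
    ext x y
    have hmd : ∀ j, (U * diagonal fun x => (d x : ℂ)) x j = U x j * (d j : ℂ) :=
      fun j => Matrix.mul_diagonal _ _ _ _
    rw [Matrix.mul_apply]
    simp only [hmd, Matrix.star_eq_conjTranspose, conjTranspose_apply, RCLike.star_def]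
    rw [sum_range_emb_aux e _ (by
      intro x' hx'
      simp [d, dif_neg hx'])]
    simp only [Matrix.sum_apply, Matrix.smul_apply, vecMulVec_apply, Pi.star_apply,
      RCLike.star_def, smul_eq_mul]
    apply Finset.sum_congr rfl
    intro i _
    simp only [U, of_apply, hbbe, hde, hwW]
    ring
  have herm : M.IsHermitian := by
    rw [hMU]
    have hdstar : star (fun x => (d x : ℂ)) = fun x => (d x : ℂ) := by
      funext x; exact Complex.conj_ofReal _
    simp only [Matrix.IsHermitian, conjTranspose_mul, Matrix.star_eq_conjTranspose,
      conjTranspose_conjTranspose, diagonal_conjTranspose, hdstar, mul_assoc]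
  rw [vnEntropy, dif_pos herm]
  have hsum := eig_multiset_aux herm U hU d hMU (fun t => t * Real.log t)
  rw [hsum]
  congr 1
  rw [sum_range_emb_aux e _ (by
    intro x' hx'
    simp [hd0 x' hx'])]
  apply Finset.sum_congr rfl
  intro i _
  rw [hde]

end SpectralAux

section Helpers

variable {m : Type*} [Fintype m]

lemma vmv_mul_vmv_aux (u v x y : m → ℂ) :
    Matrix.vecMulVec u v * Matrix.vecMulVec x y = (v ⬝ᵥ x) • Matrix.vecMulVec u y := by
  ext i j
  simp only [Matrix.mul_apply, Matrix.vecMulVec_apply, Matrix.smul_apply, dotProduct,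
    smul_eq_mul]
  rw [Finset.sum_mul]
  apply Finset.sum_congr rfl
  intro k _
  ring

lemma kron_vmv_aux {C P : Type*} (u : C → ℂ) (v : P → ℂ) :
    (Matrix.vecMulVec u (star u)) ⊗ₖ (Matrix.vecMulVec v (star v)) =
      Matrix.vecMulVec (fun cp : C × P => u cp.1 * v cp.2)
        (star fun cp : C × P => u cp.1 * v cp.2) := by
  ext ⟨c, p⟩ ⟨c', p'⟩
  simp only [Matrix.kroneckerMap_apply, Matrix.vecMulVec_apply, Pi.star_apply, star_mul']
  ring

lemma orth_pair_aux {ι P : Type*} [Fintype ι] [DecidableEq ι] [Fintype P] (b : ι → P → ℂ)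
    (hb : ∀ i i', ∑ p, (starRingEnd ℂ) (b i p) * b i' p = if i = i' then 1 else 0)
    (α β : ι → ℂ) :
    ∑ p, (∑ i, α i * b i p) * (∑ j, β j * (starRingEnd ℂ) (b j p)) = ∑ i, α i * β i := by
  have hb' : ∀ i j, ∑ p, b i p * (starRingEnd ℂ) (b j p) = if i = j then 1 else 0 := by
    intro i j
    simpa [map_sum, _root_.map_mul, apply_ite] using congrArg (starRingEnd ℂ) (hb i j)
  calc ∑ p, (∑ i, α i * b i p) * (∑ j, β j * (starRingEnd ℂ) (b j p))
      = ∑ p, ∑ i, ∑ j, α i * β j * (b i p * (starRingEnd ℂ) (b j p)) := by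
        apply Finset.sum_congr rfl; intro p _
        rw [Finset.sum_mul_sum]
        apply Finset.sum_congr rfl; intro i _
        apply Finset.sum_congr rfl; intro j _
        ring
    _ = ∑ i, ∑ j, α i * β j * ∑ p, b i p * (starRingEnd ℂ) (b j p) := by
        rw [Finset.sum_comm]
        apply Finset.sum_congr rfl; intro i _
        rw [Finset.sum_comm]
        apply Finset.sum_congr rfl; intro j _
        rw [Finset.mul_sum]
    _ = ∑ i, α i * β i := by
        simp [hb', mul_ite, Finset.sum_ite_eq]

end Helpers

/-- For a pure bipartite state `ρ = |ψ⟩⟨ψ|` with Schmidt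
decomposition `∑_i √λ_i |a_i⟩⊗|b_i⟩` (distinct nonzero Schmidt coefficients),
MID equals the entanglement entropy: `Q(ρ) = I(ρ) - I(Π(ρ)) = S(ρ_C)`,
where `Π` dephases in the Schmidt (eigen)bases of the reduced states. -/
theorem mid_equals_entanglement_for_pure_states
    {C P ι : Type*} [Fintype C] [Fintype P] [Fintype ι]
    [DecidableEq C] [DecidableEq P] [DecidableEq ι]
    (lam : ι → ℝ) (hpos : ∀ i, 0 < lam i) (hdist : Function.Injective lam)
    (hsum : ∑ i, lam i = 1)
    (a : ι → C → ℂ) (b : ι → P → ℂ)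
    -- orthonormality of the Schmidt bases
    (ha : ∀ i i', ∑ c, (starRingEnd ℂ) (a i c) * a i' c = if i = i' then 1 else 0)
    (hb : ∀ i i', ∑ p, (starRingEnd ℂ) (b i p) * b i' p = if i = i' then 1 else 0)
    -- completeness of the Schmidt bases
    (hac : ∀ c c', ∑ i, a i c * (starRingEnd ℂ) (a i c') = if c = c' then 1 else 0)
    (hbc : ∀ p p', ∑ i, b i p * (starRingEnd ℂ) (b i p') = if p = p' then 1 else 0)
    (ψ : C × P → ℂ)
    (hψ : ψ = fun cp => ∑ i, (Real.sqrt (lam i) : ℂ) * a i cp.1 * b i cp.2)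
    (ρ : Matrix (C × P) (C × P) ℂ) (hρ : ρ = Matrix.vecMulVec ψ (star ψ))
    (dρ : Matrix (C × P) (C × P) ℂ)
    (hdρ : dρ = ∑ i, ∑ i',
      ((Matrix.vecMulVec (a i) (star (a i))) ⊗ₖ (Matrix.vecMulVec (b i') (star (b i')))) * ρ *
      ((Matrix.vecMulVec (a i) (star (a i))) ⊗ₖ (Matrix.vecMulVec (b i') (star (b i'))))) :
    mutualInfo ρ - mutualInfo dρ = vnEntropy (ptrSnd ρ) := by
  classical
  set s : ι → ℂ := fun i => (Real.sqrt (lam i) : ℂ) with hs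
  have hsconj : ∀ i, (starRingEnd ℂ) (s i) = s i := fun i => Complex.conj_ofReal _
  have hss : ∀ i, s i * s i = (lam i : ℂ) := by
    intro i
    show ((Real.sqrt (lam i) : ℂ)) * ((Real.sqrt (lam i) : ℂ)) = _
    rw [← Complex.ofReal_mul, Real.mul_self_sqrt (hpos i).le]
  -- the product Schmidt vectors
  set w : ι → C × P → ℂ := fun i cp => a i cp.1 * b i cp.2 with hwdef
  have hw : ∀ i j, ∑ cp : C × P, (starRingEnd ℂ) (w i cp) * w j cp
      = if i = j then 1 else 0 := by
    intro i j
    rw [Fintype.sum_prod_type]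
    calc ∑ c, ∑ p, (starRingEnd ℂ) (w i (c, p)) * w j (c, p)
        = (∑ c, (starRingEnd ℂ) (a i c) * a j c) * (∑ p, (starRingEnd ℂ) (b i p) * b j p) := by
          rw [Finset.sum_mul_sum]
          apply Finset.sum_congr rfl; intro c _
          apply Finset.sum_congr rfl; intro p _
          simp only [w, _root_.map_mul]
          ring
      _ = if i = j then 1 else 0 := by
          rw [ha, hb]
          split_ifs <;> simp
  -- canonical forms of the reduced states
  have hA : ptrSnd ρ = ∑ i, (lam i : ℂ) • Matrix.vecMulVec (a i) (star (a i)) := by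
    ext c c'
    show ∑ p, ρ (c, p) (c', p) = _
    calc ∑ p, ρ (c, p) (c', p)
        = ∑ p, (∑ i, (s i * a i c) * b i p) *
            (∑ j, ((starRingEnd ℂ) (s j * a j c')) * (starRingEnd ℂ) (b j p)) := by
          apply Finset.sum_congr rfl; intro p _
          rw [hρ, Matrix.vecMulVec_apply, hψ]
          simp only [Pi.star_apply, RCLike.star_def, map_sum, _root_.map_mul]
          all_goals first
          | rfl
          | (congr 1 <;> exact Finset.sum_congr rfl fun _ _ => by ring)
      _ = ∑ i, (s i * a i c) * (starRingEnd ℂ) (s i * a i c') := orth_pair_aux b hb _ _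
      _ = ∑ i, (lam i : ℂ) • Matrix.vecMulVec (a i) (star (a i)) c c' := by
          apply Finset.sum_congr rfl; intro i _
          simp only [Matrix.sum_apply, Matrix.smul_apply, Matrix.vecMulVec_apply,
            Pi.star_apply, RCLike.star_def, smul_eq_mul, _root_.map_mul, hsconj]
          rw [mul_mul_mul_comm, hss]
      _ = (∑ i, (lam i : ℂ) • Matrix.vecMulVec (a i) (star (a i))) c c' := by
          simp [Matrix.sum_apply]
  have hB : ptrFst ρ = ∑ i, (lam i : ℂ) • Matrix.vecMulVec (b i) (star (b i)) := by
    ext p p'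
    show ∑ c, ρ (c, p) (c, p') = _
    calc ∑ c, ρ (c, p) (c, p')
        = ∑ c, (∑ i, (s i * b i p) * a i c) *
            (∑ j, ((starRingEnd ℂ) (s j * b j p')) * (starRingEnd ℂ) (a j c)) := by
          apply Finset.sum_congr rfl; intro c _
          rw [hρ, Matrix.vecMulVec_apply, hψ]
          simp only [Pi.star_apply, RCLike.star_def, map_sum, _root_.map_mul]
          all_goals first
          | rfl
          | (congr 1 <;> exact Finset.sum_congr rfl fun _ _ => by ring)
      _ = ∑ i, (s i * b i p) * (starRingEnd ℂ) (s i * b i p') := orth_pair_aux a ha _ _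
      _ = (∑ i, (lam i : ℂ) • Matrix.vecMulVec (b i) (star (b i))) p p' := by
          simp only [Matrix.sum_apply, Matrix.smul_apply, Matrix.vecMulVec_apply,
            Pi.star_apply, RCLike.star_def, smul_eq_mul]
          apply Finset.sum_congr rfl; intro i _
          simp only [_root_.map_mul, hsconj]
          rw [mul_mul_mul_comm, hss]
  -- ψ in terms of w
  have hψw : ψ = fun cp => ∑ i, s i * w i cp := by
    rw [hψ]
    funext cp
    apply Finset.sum_congr rfl; intro i _
    simp only [w]
    ring
  -- norm of ψ
  have hNorm : ∑ cp : C × P, (starRingEnd ℂ) (ψ cp) * ψ cp = 1 := by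
    calc ∑ cp : C × P, (starRingEnd ℂ) (ψ cp) * ψ cp
        = ∑ cp : C × P, (∑ i, s i * w i cp) * (∑ j, (starRingEnd ℂ) (s j) * (starRingEnd ℂ) (w j cp)) := by
          apply Finset.sum_congr rfl; intro cp _
          rw [hψw]
          simp only [map_sum, _root_.map_mul]
          ring
      _ = ∑ i, s i * (starRingEnd ℂ) (s i) := by
          exact orth_pair_aux w hw (fun i => s i) (fun j => (starRingEnd ℂ) (s j))
      _ = 1 := by
          have : ∀ i, s i * (starRingEnd ℂ) (s i) = (lam i : ℂ) := by
            intro i; rw [hsconj, hss]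
          rw [Finset.sum_congr rfl fun i _ => this i]
          norm_cast
  -- the dephased state in canonical form
  have hdot : ∀ i i', (star fun cp : C × P => a i cp.1 * b i' cp.2) ⬝ᵥ ψ
      = if i = i' then s i else 0 := by
    intro i i'
    calc (star fun cp : C × P => a i cp.1 * b i' cp.2) ⬝ᵥ ψ
        = ∑ c, ∑ p, ∑ j, s j * ((starRingEnd ℂ) (a i c) * a j c) *
            ((starRingEnd ℂ) (b i' p) * b j p) := by
          rw [dotProduct, Fintype.sum_prod_type]
          apply Finset.sum_congr rfl; intro c _
          apply Finset.sum_congr rfl; intro p _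
          rw [hψ, Finset.mul_sum]
          apply Finset.sum_congr rfl; intro j _
          simp only [Pi.star_apply, RCLike.star_def, _root_.map_mul]
          ring
      _ = ∑ j, s j * ((∑ c, (starRingEnd ℂ) (a i c) * a j c) *
            (∑ p, (starRingEnd ℂ) (b i' p) * b j p)) := by
          rw [Finset.sum_congr rfl (fun c (_ : c ∈ Finset.univ) => Finset.sum_comm)]
          rw [Finset.sum_comm]
          apply Finset.sum_congr rfl; intro j _
          conv_rhs => rw [Finset.sum_mul_sum]; simp only [Finset.mul_sum]
          apply Finset.sum_congr rfl; intro c _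
          apply Finset.sum_congr rfl; intro p _
          ring
      _ = if i = i' then s i else 0 := by
          simp only [ha, hb]
          rw [Fintype.sum_eq_single i (fun j hj => by simp [if_neg (Ne.symm hj)])]
          by_cases h : i = i'
          · subst h; simp
          · simp [if_neg h, if_neg (Ne.symm h)]
  have hdot' : ∀ i i', (star ψ) ⬝ᵥ (fun cp : C × P => a i cp.1 * b i' cp.2)
      = if i = i' then s i else 0 := by
    intro i i'
    have h1 : (star ψ) ⬝ᵥ (fun cp : C × P => a i cp.1 * b i' cp.2)
        = (starRingEnd ℂ) ((star fun cp : C × P => a i cp.1 * b i' cp.2) ⬝ᵥ ψ) := by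
      simp only [dotProduct, map_sum, _root_.map_mul, Pi.star_apply, RCLike.star_def,
        RingHomCompTriple.comp_apply, Complex.conj_conj]
      apply Finset.sum_congr rfl; intro cp _
      simp only [RingHom.id_apply]
      ring
    rw [h1, hdot]
    split_ifs
    · exact hsconj i
    · exact map_zero _
  have hC : dρ = ∑ i, (lam i : ℂ) • Matrix.vecMulVec (w i) (star (w i)) := by
    rw [hdρ]
    have hterm : ∀ i i',
        ((Matrix.vecMulVec (a i) (star (a i))) ⊗ₖ (Matrix.vecMulVec (b i') (star (b i')))) * ρ *
        ((Matrix.vecMulVec (a i) (star (a i))) ⊗ₖ (Matrix.vecMulVec (b i') (star (b i')))) =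
        if i = i' then (lam i : ℂ) • Matrix.vecMulVec (w i) (star (w i)) else 0 := by
      intro i i'
      rw [kron_vmv_aux, hρ]
      rw [vmv_mul_vmv_aux, Matrix.smul_mul, vmv_mul_vmv_aux]
      rw [hdot i i', hdot' i i']
      by_cases h : i = i'
      · subst h
        rw [if_pos rfl, smul_smul, hss, if_pos rfl]
        try rfl
      · rw [if_neg h, zero_smul, if_neg h]
    calc (∑ i, ∑ i',
        ((Matrix.vecMulVec (a i) (star (a i))) ⊗ₖ (Matrix.vecMulVec (b i') (star (b i')))) * ρ *
        ((Matrix.vecMulVec (a i) (star (a i))) ⊗ₖ (Matrix.vecMulVec (b i') (star (b i')))))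
        = ∑ i, ∑ i', (if i = i' then (lam i : ℂ) • Matrix.vecMulVec (w i) (star (w i)) else 0) := by
          apply Finset.sum_congr rfl; intro i _
          apply Finset.sum_congr rfl; intro i' _
          exact hterm i i'
      _ = ∑ i, (lam i : ℂ) • Matrix.vecMulVec (w i) (star (w i)) := by
          simp [Finset.sum_ite_eq]
  have hbb1 : ∀ i, ∑ p, b i p * (starRingEnd ℂ) (b i p) = 1 := by
    intro i
    calc ∑ p, b i p * (starRingEnd ℂ) (b i p)
        = ∑ p, (starRingEnd ℂ) (b i p) * b i p :=
          Finset.sum_congr rfl fun p _ => mul_comm _ _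
      _ = 1 := by simpa using hb i i
  have haa1 : ∀ i, ∑ c, a i c * (starRingEnd ℂ) (a i c) = 1 := by
    intro i
    calc ∑ c, a i c * (starRingEnd ℂ) (a i c)
        = ∑ c, (starRingEnd ℂ) (a i c) * a i c :=
          Finset.sum_congr rfl fun c _ => mul_comm _ _
      _ = 1 := by simpa using ha i i
  have hA' : ptrSnd dρ = ∑ i, (lam i : ℂ) • Matrix.vecMulVec (a i) (star (a i)) := by
    ext c c'
    show ∑ p, dρ (c, p) (c', p) = _
    calc ∑ p, dρ (c, p) (c', p)
        = ∑ p, ∑ i, ((lam i : ℂ) * (a i c * (starRingEnd ℂ) (a i c'))) *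
            (b i p * (starRingEnd ℂ) (b i p)) := by
          apply Finset.sum_congr rfl; intro p _
          rw [hC]
          simp only [Matrix.sum_apply, Matrix.smul_apply, Matrix.vecMulVec_apply,
            Pi.star_apply, RCLike.star_def, smul_eq_mul, w, _root_.map_mul]
          apply Finset.sum_congr rfl; intro i _
          ring
      _ = ∑ i, ((lam i : ℂ) * (a i c * (starRingEnd ℂ) (a i c'))) *
            ∑ p, b i p * (starRingEnd ℂ) (b i p) := by
          rw [Finset.sum_comm]
          apply Finset.sum_congr rfl; intro i _
          rw [Finset.mul_sum]
      _ = (∑ i, (lam i : ℂ) • Matrix.vecMulVec (a i) (star (a i))) c c' := by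
          simp only [hbb1, mul_one, Matrix.sum_apply, Matrix.smul_apply,
            Matrix.vecMulVec_apply, Pi.star_apply, RCLike.star_def, smul_eq_mul]
  have hB' : ptrFst dρ = ∑ i, (lam i : ℂ) • Matrix.vecMulVec (b i) (star (b i)) := by
    ext p p'
    show ∑ c, dρ (c, p) (c, p') = _
    calc ∑ c, dρ (c, p) (c, p')
        = ∑ c, ∑ i, ((lam i : ℂ) * (b i p * (starRingEnd ℂ) (b i p'))) *
            (a i c * (starRingEnd ℂ) (a i c)) := by
          apply Finset.sum_congr rfl; intro c _
          rw [hC]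
          simp only [Matrix.sum_apply, Matrix.smul_apply, Matrix.vecMulVec_apply,
            Pi.star_apply, RCLike.star_def, smul_eq_mul, w, _root_.map_mul]
          apply Finset.sum_congr rfl; intro i _
          ring
      _ = ∑ i, ((lam i : ℂ) * (b i p * (starRingEnd ℂ) (b i p'))) *
            ∑ c, a i c * (starRingEnd ℂ) (a i c) := by
          rw [Finset.sum_comm]
          apply Finset.sum_congr rfl; intro i _
          rw [Finset.mul_sum]
      _ = (∑ i, (lam i : ℂ) • Matrix.vecMulVec (b i) (star (b i))) p p' := by
          simp only [haa1, mul_one, Matrix.sum_apply, Matrix.smul_apply,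
            Matrix.vecMulVec_apply, Pi.star_apply, RCLike.star_def, smul_eq_mul]
  -- entropies
  have hSC := keyEntropy_aux lam a ha _ hA
  have hSP := keyEntropy_aux lam b hb _ hB
  have hSd := keyEntropy_aux lam w hw dρ hC
  have hSρ : vnEntropy ρ = 0 := by
    have h1 : ρ = ∑ _i : Fin 1, (((1 : ℝ) : ℂ)) • Matrix.vecMulVec ψ (star ψ) := by
      simp [hρ]
    have h2 : ∀ i j : Fin 1,
        ∑ x, (starRingEnd ℂ) (((fun _ : Fin 1 => ψ) i) x) * ((fun _ : Fin 1 => ψ) j) x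
          = if i = j then 1 else 0 := by
      intro i j
      have hij : i = j := Subsingleton.elim i j
      simp [hij, hNorm]
    have := keyEntropy_aux (fun _ : Fin 1 => (1 : ℝ)) (fun _ => ψ) h2 ρ h1
    simpa using this
  have hpS : ptrSnd dρ = ptrSnd ρ := by rw [hA', hA]
  have hpF : ptrFst dρ = ptrFst ρ := by rw [hB', hB]
  simp only [mutualInfo, hpS, hpF]
  rw [hSρ, hSd, hSC]
  ring
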